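/- (Conditional Wald identity.) In the IV setup, let u ∈ 𝒰 satisfy P(T = 1, U = u) > 0, P(T = 0, U = u) > 0, and the strict relevance condition P(T̃_{1,u} = 1) > P(T̃_{0,u} = 1). Then P(T̃_{1,u} = 1, T̃_{0,u} = 0) > 0 and the conditional local average treatment effect at u is identified by the Wald ratio: E[Y_{1,u} − Y_{0,u} ∣ T̃_{1,u} = 1, T̃_{0,u} = 0] = (E[Y ∣ T = 1, U = u] − E[Y ∣ T = 0, U = u]) / (E[T̃ ∣ T = 1, U = u] − E[T̃ ∣ T = 0, U = u]). -/

import Mathlib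

open MeasureTheory ProbabilityTheory

/-- Conditional expectation `E[Z ∣ B] = E[Z·1_B] / P(B)`. -/
noncomputable def cexp {Ω : Type*} [MeasurableSpace Ω] (μ : Measure Ω) (Z : Ω → ℝ)
    (B : Set Ω) : ℝ :=
  (∫ ω in B, Z ω ∂μ) / (μ B).toReal

/-- If `X` is independent of `W`, the integral of `X` over `W ⁻¹' s` factorizes. -/
lemma indep_setIntegral {Ω β : Type*} [MeasurableSpace Ω] {μ : Measure Ω}
    [IsProbabilityMeasure μ] [MeasurableSpace β] {X : Ω → ℝ} {W : Ω → β}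
    (h : IndepFun X W μ) (hX : Measurable X) (hW : Measurable W)
    {s : Set β} (hs : MeasurableSet s) :
    ∫ ω in W ⁻¹' s, X ω ∂μ = (∫ ω, X ω ∂μ) * (μ (W ⁻¹' s)).toReal := by
  have hind : Measurable (Set.indicator s (1 : β → ℝ)) := measurable_one.indicator hs
  have hI : IndepFun X (fun ω => Set.indicator s (1 : β → ℝ) (W ω)) μ :=
    h.comp measurable_id hind
  have h1 : (fun ω => X ω * Set.indicator s (1 : β → ℝ) (W ω))
      = Set.indicator (W ⁻¹' s) X := by
    funext ω
    by_cases hω : W ω ∈ s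
    · simp [Set.indicator_of_mem, hω, Set.mem_preimage.mpr hω]
    · have : ω ∉ W ⁻¹' s := hω
      simp [Set.indicator_of_notMem, hω, this]
  have h2 : (fun ω => Set.indicator s (1 : β → ℝ) (W ω))
      = Set.indicator (W ⁻¹' s) (1 : Ω → ℝ) := by
    funext ω
    by_cases hω : W ω ∈ s
    · simp [Set.indicator_of_mem, hω, Set.mem_preimage.mpr hω]
    · have : ω ∉ W ⁻¹' s := hω
      simp [Set.indicator_of_notMem, hω, this]
  have hmul := hI.integral_fun_mul_eq_mul_integral hX.aestronglyMeasurable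
    (hind.comp hW).aestronglyMeasurable
  calc ∫ ω in W ⁻¹' s, X ω ∂μ
      = ∫ ω, Set.indicator (W ⁻¹' s) X ω ∂μ := (integral_indicator (hW hs)).symm
    _ = ∫ ω, X ω * Set.indicator s (1 : β → ℝ) (W ω) ∂μ := by rw [h1]
    _ = (∫ ω, X ω ∂μ) * ∫ ω, Set.indicator s (1 : β → ℝ) (W ω) ∂μ := hmul
    _ = (∫ ω, X ω ∂μ) * (μ (W ⁻¹' s)).toReal := by
        rw [h2, integral_indicator_one (hW hs), measureReal_def]

theorem conditional_wald_identity
    {Ω 𝒰 : Type*} [MeasurableSpace Ω] (μ : Measure Ω) [IsProbabilityMeasure μ]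
    [Countable 𝒰] [MeasurableSpace 𝒰] [MeasurableSingletonClass 𝒰]
    (T : Ω → Bool) (U : Ω → 𝒰)
    (Ttil : Bool → 𝒰 → Ω → Bool) (Ypo : Bool → 𝒰 → Ω → ℝ)
    (Tperc : Ω → Bool) (Y : Ω → ℝ)
    (hT : Measurable T) (hU : Measurable U)
    (hTtil : ∀ (t : Bool) (u : 𝒰), Measurable (Ttil t u))
    (hYpo : ∀ (t : Bool) (u : 𝒰), Measurable (Ypo t u))
    (hbdd : ∃ C : ℝ, ∀ (t : Bool) (u : 𝒰) (ω : Ω), |Ypo t u ω| ≤ C)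
    (hTperc : ∀ ω, Tperc ω = Ttil (T ω) (U ω) ω)
    (hYobs : ∀ ω, Y ω = Ypo (Tperc ω) (U ω) ω)
    (hunconf : ∀ u : 𝒰,
      IndepFun (fun ω => (Ypo false u ω, Ypo true u ω, Ttil false u ω, Ttil true u ω))
        (fun ω => (T ω, U ω)) μ)
    (hmono : ∀ (u : 𝒰) (ω : Ω), Ttil false u ω ≤ Ttil true u ω) :
    ∀ u : 𝒰, 0 < μ ({ω | T ω = true} ∩ {ω | U ω = u}) →
      0 < μ ({ω | T ω = false} ∩ {ω | U ω = u}) →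
      μ {ω | Ttil false u ω = true} < μ {ω | Ttil true u ω = true} →
      0 < μ {ω | Ttil true u ω = true ∧ Ttil false u ω = false} ∧
      cexp μ (fun ω => Ypo true u ω - Ypo false u ω)
          {ω | Ttil true u ω = true ∧ Ttil false u ω = false}
        = (cexp μ Y ({ω | T ω = true} ∩ {ω | U ω = u})
              - cexp μ Y ({ω | T ω = false} ∩ {ω | U ω = u}))
          / (cexp μ (fun ω => if Tperc ω = true then (1 : ℝ) else 0)
                ({ω | T ω = true} ∩ {ω | U ω = u})
              - cexp μ (fun ω => if Tperc ω = true then (1 : ℝ) else 0)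
                  ({ω | T ω = false} ∩ {ω | U ω = u})) := by
  intro u hp1 hp0 hlt
  obtain ⟨C, hC⟩ := hbdd
  -- notation
  set V : Ω → ℝ × ℝ × Bool × Bool :=
    fun ω => (Ypo false u ω, Ypo true u ω, Ttil false u ω, Ttil true u ω) with hV
  set W : Ω → Bool × 𝒰 := fun ω => (T ω, U ω) with hW
  have hWm : Measurable W := hT.prodMk hU
  have hVm : Measurable V :=
    (hYpo false u).prodMk ((hYpo true u).prodMk
      ((hTtil false u).prodMk (hTtil true u)))
  -- the sets B t
  have hBset : ∀ t : Bool, ({ω | T ω = t} ∩ {ω | U ω = u})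
      = W ⁻¹' ({(t, u)} : Set (Bool × 𝒰)) := by
    intro t; ext ω; simp [hW, Prod.ext_iff, Set.mem_preimage]
  -- the selection maps
  set f : Bool → ℝ × ℝ × Bool × Bool → ℝ :=
    fun t p => if (if t = true then p.2.2.2 else p.2.2.1) = true then p.2.1 else p.1
      with hf
  set g : Bool → ℝ × ℝ × Bool × Bool → ℝ :=
    fun t p => if (if t = true then p.2.2.2 else p.2.2.1) = true then (1 : ℝ) else 0
      with hg
  have hbool : ∀ t : Bool, Measurable fun p : ℝ × ℝ × Bool × Bool =>
      (if t = true then p.2.2.2 else p.2.2.1) := by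
    intro t
    cases t
    · exact measurable_snd.snd.fst
    · exact measurable_snd.snd.snd
  have hfm : ∀ t, Measurable (f t) := by
    intro t
    exact Measurable.ite ((hbool t) (measurableSet_singleton true))
      measurable_snd.fst measurable_fst
  have hgm : ∀ t, Measurable (g t) := by
    intro t
    exact Measurable.ite ((hbool t) (measurableSet_singleton true))
      measurable_const measurable_const
  have hfVeq : ∀ (t : Bool) (ω : Ω), f t (V ω) = Ypo (Ttil t u ω) u ω := by
    intro t ω; cases t <;> cases h : Ttil false u ω <;> cases h' : Ttil true u ω <;>
      simp [hf, hV, h, h']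
  have hgVeq : ∀ (t : Bool) (ω : Ω),
      g t (V ω) = if Ttil t u ω = true then (1 : ℝ) else 0 := by
    intro t ω; cases t <;> simp [hg, hV]
  -- integrability
  have hint : ∀ (X : Ω → ℝ), Measurable X → (∀ ω, |X ω| ≤ max C 1) → Integrable X μ := by
    intro X hXm hXb
    exact (integrable_const (max C 1)).mono' hXm.aestronglyMeasurable
      (Filter.Eventually.of_forall hXb)
  have hfVbd : ∀ (t : Bool) (ω : Ω), |f t (V ω)| ≤ max C 1 := by
    intro t ω; rw [hfVeq]
    exact le_trans (hC _ _ _) (le_max_left _ _)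
  have hfVint : ∀ t, Integrable (fun ω => f t (V ω)) μ :=
    fun t => hint _ ((hfm t).comp hVm) (hfVbd t)
  -- independence and factorization of set integrals
  have hfact : ∀ (t : Bool) (φ : ℝ × ℝ × Bool × Bool → ℝ), Measurable φ →
      ∀ t' : Bool, ∫ ω in W ⁻¹' ({(t', u)} : Set (Bool × 𝒰)), φ (V ω) ∂μ
        = (∫ ω, φ (V ω) ∂μ) * (μ (W ⁻¹' ({(t', u)} : Set (Bool × 𝒰)))).toReal := by
    intro t φ hφ t'
    exact indep_setIntegral ((hunconf u).comp hφ measurable_id)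
      (hφ.comp hVm) hWm (measurableSet_singleton _)
  -- B t facts
  have hBmeas : ∀ t : Bool, MeasurableSet ({ω | T ω = t} ∩ {ω | U ω = u}) := by
    intro t
    exact (hT (measurableSet_singleton t)).inter (hU (measurableSet_singleton u))
  have hBpos : ∀ t : Bool, 0 < μ ({ω | T ω = t} ∩ {ω | U ω = u}) := by
    intro t; cases t
    exacts [hp0, hp1]
  have hBtoReal : ∀ t : Bool, (μ ({ω | T ω = t} ∩ {ω | U ω = u})).toReal ≠ 0 := by
    intro t
    exact ENNReal.toReal_ne_zero.mpr ⟨(hBpos t).ne', measure_ne_top μ _⟩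
  -- on B t, Y agrees with f t ∘ V and the perceived-treatment indicator with g t ∘ V
  have hYon : ∀ t : Bool, Set.EqOn Y (fun ω => f t (V ω))
      ({ω | T ω = t} ∩ {ω | U ω = u}) := by
    intro t ω hω
    obtain ⟨h1, h2⟩ := hω
    simp only [Set.mem_setOf_eq] at h1 h2
    rw [hYobs ω, hTperc ω, h1, h2]
    exact (hfVeq t ω).symm
  have hTon : ∀ t : Bool, Set.EqOn (fun ω => if Tperc ω = true then (1 : ℝ) else 0)
      (fun ω => g t (V ω)) ({ω | T ω = t} ∩ {ω | U ω = u}) := by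
    intro t ω hω
    obtain ⟨h1, h2⟩ := hω
    simp only [Set.mem_setOf_eq] at h1 h2
    simp only [hTperc ω, h1, h2, hgVeq]
  -- conditional expectations at B t
  have hcexpY : ∀ t : Bool, cexp μ Y ({ω | T ω = t} ∩ {ω | U ω = u})
      = ∫ ω, f t (V ω) ∂μ := by
    intro t
    unfold cexp
    rw [setIntegral_congr_fun (hBmeas t) (hYon t), hBset t,
      hfact t (f t) (hfm t) t, ← hBset t]
    exact mul_div_cancel_right₀ _ (hBtoReal t)
  have hcexpT : ∀ t : Bool, cexp μ (fun ω => if Tperc ω = true then (1 : ℝ) else 0)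
      ({ω | T ω = t} ∩ {ω | U ω = u}) = ∫ ω, g t (V ω) ∂μ := by
    intro t
    unfold cexp
    rw [setIntegral_congr_fun (hBmeas t) (hTon t), hBset t,
      hfact t (g t) (hgm t) t, ← hBset t]
    exact mul_div_cancel_right₀ _ (hBtoReal t)
  -- expectation of g t ∘ V is the measure of the set
  have hgint : ∀ t : Bool, ∫ ω, g t (V ω) ∂μ = (μ {ω | Ttil t u ω = true}).toReal := by
    intro t
    have : (fun ω => g t (V ω)) = Set.indicator {ω | Ttil t u ω = true} (1 : Ω → ℝ) := by
      funext ω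
      rw [hgVeq]
      by_cases h : Ttil t u ω = true
      · simp [h, Set.indicator_of_mem, Set.mem_setOf_eq]
      · simp [h, Set.indicator_of_notMem, Set.mem_setOf_eq]
    rw [this]
    exact integral_indicator_one (hTtil t u (measurableSet_singleton true))
  -- the complier set
  set Cset : Set Ω := {ω | Ttil true u ω = true ∧ Ttil false u ω = false} with hCset
  have hCmeas : MeasurableSet Cset :=
    ((hTtil true u) (measurableSet_singleton true)).inter
      ((hTtil false u) (measurableSet_singleton false))
  have hsub : {ω | Ttil false u ω = true} ⊆ {ω | Ttil true u ω = true} := by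
    intro ω hω
    simp only [Set.mem_setOf_eq] at hω ⊢
    have := hmono u ω
    rw [hω] at this
    exact le_antisymm (Bool.le_true _) this
  have hunion : {ω | Ttil true u ω = true} = Cset ∪ {ω | Ttil false u ω = true} := by
    ext ω
    simp only [Set.mem_setOf_eq, Set.mem_union, hCset]
    constructor
    · intro h
      cases hfu : Ttil false u ω
      · exact Or.inl ⟨h, rfl⟩
      · exact Or.inr rfl
    · rintro (⟨h, -⟩ | h)
      · exact h
      · exact hsub h
  have hdisj : Disjoint Cset {ω | Ttil false u ω = true} := by
    rw [Set.disjoint_left]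
    rintro ω ⟨-, h2⟩ h3
    simp only [Set.mem_setOf_eq] at h3
    rw [h3] at h2
    exact Bool.noConfusion h2
  have hmeasadd : μ {ω | Ttil true u ω = true}
      = μ Cset + μ {ω | Ttil false u ω = true} := by
    rw [hunion]
    exact measure_union hdisj ((hTtil false u) (measurableSet_singleton true))
  have hCpos : 0 < μ Cset := by
    by_contra h
    push_neg at h
    have h0 : μ Cset = 0 := le_antisymm h zero_le
    rw [hmeasadd, h0, zero_add] at hlt
    exact lt_irrefl _ hlt
  have hCfin : μ Cset ≠ ⊤ := measure_ne_top μ _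
  have hCtoReal : (μ Cset).toReal ≠ 0 :=
    ENNReal.toReal_ne_zero.mpr ⟨hCpos.ne', hCfin⟩
  -- denominator equals (μ Cset).toReal
  have hdenom : (μ {ω | Ttil true u ω = true}).toReal
      - (μ {ω | Ttil false u ω = true}).toReal = (μ Cset).toReal := by
    rw [hmeasadd, ENNReal.toReal_add hCfin (measure_ne_top μ _)]
    ring
  -- numerator: pointwise identity
  have hptwise : ∀ ω, f true (V ω) - f false (V ω)
      = Set.indicator Cset (fun ω => Ypo true u ω - Ypo false u ω) ω := by
    intro ω
    rw [hfVeq, hfVeq]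
    cases hft : Ttil false u ω <;> cases htt : Ttil true u ω
    · have : ω ∉ Cset := by
        simp [hCset, htt]
      simp [hft, htt, Set.indicator_of_notMem this]
    · have : ω ∈ Cset := ⟨htt, hft⟩
      simp [hft, htt, Set.indicator_of_mem this]
    · have := hmono u ω
      rw [hft, htt] at this
      exact absurd this (by simp)
    · have : ω ∉ Cset := by
        simp [hCset, hft]
      simp [hft, htt, Set.indicator_of_notMem this]
  have hnum : (∫ ω, f true (V ω) ∂μ) - (∫ ω, f false (V ω) ∂μ)
      = ∫ ω in Cset, (Ypo true u ω - Ypo false u ω) ∂μ := by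
    rw [← integral_sub (hfVint true) (hfVint false)]
    rw [← integral_indicator hCmeas]
    exact integral_congr_ae (Filter.Eventually.of_forall hptwise)
  refine ⟨hCpos, ?_⟩
  rw [hcexpY true, hcexpY false, hcexpT true, hcexpT false, hgint true, hgint false,
    hdenom, hnum]
  unfold cexp
  rfl
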